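/- Let f : ℝ^d → ℝ be twice continuously differentiable with L_H-Lipschitz continuous Hessian. Let x ∈ ℝ^d, g = ∇f(x), H = ∇²f(x), and suppose d ∈ ℝ^d is nonzero and satisfies ⟨d, g⟩ = −‖d‖² and ⟨d, Hd⟩ ≤ 0. Let 0 < ρ < 1. Then every step-size α with 0 < α ≤ √(6(1 − ρ)/(L_H‖d‖)) satisfies the Armijo condition f(x + αd) ≤ f(x) + ρα⟨g, d⟩; consequently, with α* = √(6(1 − ρ)/(L_H‖d‖)), one has f(x + α*d) ≤ f(x) − ρ·√(6(1 − ρ)/L_H)·‖d‖^{3/2}. -/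

import Mathlib

open scoped RealInnerProductSpace

/-- The Hessian of `f : ℝ^d → ℝ` at `x`, as the derivative of the gradient. -/
noncomputable def hessian {d : ℕ} (f : EuclideanSpace ℝ (Fin d) → ℝ)
    (x : EuclideanSpace ℝ (Fin d)) :
    EuclideanSpace ℝ (Fin d) →L[ℝ] EuclideanSpace ℝ (Fin d) :=
  fderiv ℝ (gradient f) x

/-- A function vanishing at `0` with nonnegative derivative on `[0, ∞)` is nonnegative there. -/
lemma npc_aux_nonneg {g g' : ℝ → ℝ} (h : ∀ t, HasDerivAt g (g' t) t) (h0 : g 0 = 0)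
    (h' : ∀ t, 0 ≤ t → 0 ≤ g' t) : ∀ t, 0 ≤ t → 0 ≤ g t := by
  intro t ht
  have hmono : MonotoneOn g (Set.Icc 0 t) := by
    apply monotoneOn_of_deriv_nonneg (convex_Icc 0 t)
      (fun s _ => (h s).continuousAt.continuousWithinAt)
      (fun s hs => ((h s).differentiableAt).differentiableWithinAt)
    intro s hs
    rw [interior_Icc] at hs
    rw [(h s).deriv]
    exact h' s hs.1.le
  have := hmono (Set.left_mem_Icc.2 ht) (Set.right_mem_Icc.2 ht) ht
  linarith [h0 ▸ this]

lemma npc_grad_diff {d : ℕ} (f : EuclideanSpace ℝ (Fin d) → ℝ) (hf : ContDiff ℝ 2 f) :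
    Differentiable ℝ (gradient f) := by
  have h1 : ContDiff ℝ 1 (fderiv ℝ f) := hf.fderiv_right (by norm_num)
  have : gradient f = fun y => (InnerProductSpace.toDual ℝ _).symm (fderiv ℝ f y) := rfl
  rw [this]
  exact fun y => ((InnerProductSpace.toDual ℝ _).symm.contDiff.differentiable one_ne_zero _).comp y
    (h1.differentiable one_ne_zero y)

/-- Cubic Taylor-type upper bound along a nonpositive-curvature direction. -/
lemma npc_key_taylor {d : ℕ} (f : EuclideanSpace ℝ (Fin d) → ℝ) (LH : ℝ) (hf : ContDiff ℝ 2 f)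
    (hLip : ∀ x y : EuclideanSpace ℝ (Fin d), ‖hessian f x - hessian f y‖ ≤ LH * ‖x - y‖)
    (x v : EuclideanSpace ℝ (Fin d))
    (hcurv : ⟪v, hessian f x v⟫ ≤ 0) :
    ∀ α : ℝ, 0 ≤ α →
      f (x + α • v) ≤ f x + α * ⟪v, gradient f x⟫ + LH * ‖v‖ ^ 3 * α ^ 3 / 6 := by
  have hfd : Differentiable ℝ f := hf.differentiable two_ne_zero
  have hgd : Differentiable ℝ (gradient f) := npc_grad_diff f hf
  set L : ℝ → EuclideanSpace ℝ (Fin d) := fun t => x + t • v with hL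
  have hline : ∀ t : ℝ, HasDerivAt L v t := by
    intro t
    have := ((hasDerivAt_id t).smul_const v).const_add x
    rw [one_smul] at this
    exact this
  -- first derivative
  have hφ' : ∀ t : ℝ, HasDerivAt (fun t => f (L t))
      (⟪v, gradient f (L t)⟫) t := by
    intro t
    have h1 : HasFDerivAt f ((InnerProductSpace.toDual ℝ _) (gradient f (L t))) (L t) :=
      ((hfd (L t)).hasGradientAt).hasFDerivAt
    have h2 := h1.comp_hasDerivAt t (hline t)
    have h3 : (InnerProductSpace.toDual ℝ _) (gradient f (L t)) v = ⟪v, gradient f (L t)⟫ := by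
      rw [InnerProductSpace.toDual_apply_apply]; exact real_inner_comm _ _
    exact h3 ▸ h2
  -- second derivative
  have hφ'' : ∀ t : ℝ, HasDerivAt (fun t => ⟪v, gradient f (L t)⟫)
      (⟪v, hessian f (L t) v⟫) t := by
    intro t
    have h1 : HasFDerivAt (gradient f) (hessian f (L t)) (L t) :=
      (hgd (L t)).hasFDerivAt
    have h2 : HasDerivAt (fun t => gradient f (L t)) (hessian f (L t) v) t :=
      h1.comp_hasDerivAt t (hline t)
    exact (innerSL ℝ v).hasFDerivAt.comp_hasDerivAt t h2
  -- bound on second derivative for t ≥ 0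
  have hbound : ∀ t : ℝ, 0 ≤ t → ⟪v, hessian f (L t) v⟫ ≤ LH * ‖v‖ ^ 3 * t := by
    intro t ht
    have h1 : ⟪v, hessian f (L t) v⟫ - ⟪v, hessian f x v⟫
        = ⟪v, (hessian f (L t) - hessian f x) v⟫ := by
      simp [inner_sub_right]
    have h2 : ⟪v, (hessian f (L t) - hessian f x) v⟫
        ≤ ‖v‖ * (‖hessian f (L t) - hessian f x‖ * ‖v‖) := by
      calc ⟪v, (hessian f (L t) - hessian f x) v⟫ ≤ ‖v‖ * ‖(hessian f (L t) - hessian f x) v‖ :=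
            real_inner_le_norm _ _
        _ ≤ ‖v‖ * (‖hessian f (L t) - hessian f x‖ * ‖v‖) :=
            mul_le_mul_of_nonneg_left (ContinuousLinearMap.le_opNorm _ v) (norm_nonneg v)
    have h3 : ‖hessian f (L t) - hessian f x‖ ≤ LH * (t * ‖v‖) := by
      have h4 : L t - x = t • v := by simp [hL]
      calc ‖hessian f (L t) - hessian f x‖ ≤ LH * ‖L t - x‖ := hLip _ _
        _ = LH * (t * ‖v‖) := by rw [h4, norm_smul, Real.norm_of_nonneg ht]
    nlinarith [norm_nonneg v, sq_nonneg (‖v‖), hcurv]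
  intro α hα
  have hΨ : ∀ t : ℝ, 0 ≤ t →
      0 ≤ ⟪v, gradient f x⟫ + LH * ‖v‖ ^ 3 * t ^ 2 / 2 - ⟪v, gradient f (L t)⟫ := by
    apply npc_aux_nonneg (g' := fun t => LH * ‖v‖ ^ 3 * t - ⟪v, hessian f (L t) v⟫)
    · intro t
      have hp : HasDerivAt (fun t : ℝ => ⟪v, gradient f x⟫ + LH * ‖v‖ ^ 3 * t ^ 2 / 2)
          (LH * ‖v‖ ^ 3 * t) t := by
        have := ((hasDerivAt_pow 2 t).const_mul (LH * ‖v‖ ^ 3 / 2)).const_add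
          (⟪v, gradient f x⟫)
        convert this using 1
        · rfl
        · rfl
        · ext s; ring
        · push_cast; norm_num; ring
      exact hp.sub (hφ'' t)
    · simp [hL]
    · intro t ht
      linarith [hbound t ht]
  have hΦ : ∀ t : ℝ, 0 ≤ t →
      0 ≤ f x + t * ⟪v, gradient f x⟫ + LH * ‖v‖ ^ 3 * t ^ 3 / 6 - f (L t) := by
    apply npc_aux_nonneg (g' := fun t =>
      ⟪v, gradient f x⟫ + LH * ‖v‖ ^ 3 * t ^ 2 / 2 - ⟪v, gradient f (L t)⟫)
    · intro t
      have hp : HasDerivAt (fun t : ℝ => f x + t * ⟪v, gradient f x⟫ + LH * ‖v‖ ^ 3 * t ^ 3 / 6)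
          (⟪v, gradient f x⟫ + LH * ‖v‖ ^ 3 * t ^ 2 / 2) t := by
        have h1 := (hasDerivAt_id t).mul_const (⟪v, gradient f x⟫)
        have h2 := (hasDerivAt_pow 3 t).const_mul (LH * ‖v‖ ^ 3 / 6)
        have := ((h1.const_add (f x)).add h2)
        convert this using 1
        · rfl
        · rfl
        · ext s; simp only [id_eq, Pi.add_apply]; ring
        · push_cast; norm_num; ring
      exact hp.sub (hφ' t)
    · simp [hL]
    · exact hΨ
  have := hΦ α hα
  simp only [hL] at this
  linarith

/-- Armijo line-search guarantee and worst-case decrease for a nonpositive-curvature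
direction. -/
theorem npc_direction_decrease {d : ℕ} (f : EuclideanSpace ℝ (Fin d) → ℝ)
    (LH ρ : ℝ) (hLH : 0 < LH) (hρ0 : 0 < ρ) (hρ1 : ρ < 1)
    (hf : ContDiff ℝ 2 f)
    (hLip : ∀ x y : EuclideanSpace ℝ (Fin d), ‖hessian f x - hessian f y‖ ≤ LH * ‖x - y‖)
    (x v : EuclideanSpace ℝ (Fin d)) (hv : v ≠ 0)
    (hdg : ⟪v, gradient f x⟫ = -‖v‖ ^ 2)
    (hcurv : ⟪v, hessian f x v⟫ ≤ 0) :
    (∀ α : ℝ, 0 < α → α ≤ Real.sqrt (6 * (1 - ρ) / (LH * ‖v‖)) →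
      f (x + α • v) ≤ f x + ρ * α * ⟪gradient f x, v⟫) ∧
    f (x + Real.sqrt (6 * (1 - ρ) / (LH * ‖v‖)) • v) ≤
      f x - ρ * Real.sqrt (6 * (1 - ρ) / LH) * ‖v‖ ^ ((3 : ℝ) / 2) := by
  have key := npc_key_taylor f LH hf hLip x v hcurv
  have hn : (0:ℝ) < ‖v‖ := norm_pos_iff.2 hv
  have h1ρ : (0:ℝ) < 1 - ρ := by linarith
  have hC : (0:ℝ) < 6 * (1 - ρ) / (LH * ‖v‖) := div_pos (by linarith) (by positivity)
  have hflip : ⟪gradient f x, v⟫ = -‖v‖ ^ 2 := by rw [real_inner_comm]; exact hdg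
  have part1 : ∀ α : ℝ, 0 < α → α ≤ Real.sqrt (6 * (1 - ρ) / (LH * ‖v‖)) →
      f (x + α • v) ≤ f x + ρ * α * ⟪gradient f x, v⟫ := by
    intro α hα hαle
    have hα2 : α ^ 2 ≤ 6 * (1 - ρ) / (LH * ‖v‖) := by
      have := pow_le_pow_left₀ hα.le hαle 2
      rwa [Real.sq_sqrt hC.le] at this
    have hα2' : α ^ 2 * (LH * ‖v‖) ≤ 6 * (1 - ρ) := by
      rw [← le_div_iff₀ (by positivity)]
      exact hα2
    have hk := key α hα.le
    rw [hdg] at hk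
    rw [hflip]
    have hm := mul_le_mul_of_nonneg_left hα2'
      (le_of_lt (show (0:ℝ) < α * ‖v‖ ^ 2 / 6 by positivity))
    nlinarith [hm]
  refine ⟨part1, ?_⟩
  set A := Real.sqrt (6 * (1 - ρ) / (LH * ‖v‖)) with hA
  have hApos : 0 < A := Real.sqrt_pos.2 hC
  have h1 := part1 A hApos le_rfl
  have h2 : ‖v‖ ^ (2:ℕ) / Real.sqrt ‖v‖ = ‖v‖ ^ ((3:ℝ)/2) := by
    rw [Real.sqrt_eq_rpow, ← Real.rpow_natCast ‖v‖ 2, ← Real.rpow_sub hn]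
    norm_num
  have h3 : A * ‖v‖ ^ 2 = Real.sqrt (6 * (1 - ρ) / LH) * ‖v‖ ^ ((3:ℝ)/2) := by
    have hsplit : 6 * (1 - ρ) / (LH * ‖v‖) = (6 * (1 - ρ) / LH) / ‖v‖ := by
      field_simp
    rw [hA, hsplit, Real.sqrt_div (div_nonneg (by linarith) hLH.le) ‖v‖]
    rw [← h2]
    field_simp
  rw [hflip] at h1
  calc f (x + A • v) ≤ f x + ρ * A * -‖v‖ ^ 2 := h1
    _ = f x - ρ * (A * ‖v‖ ^ 2) := by ring
    _ = f x - ρ * Real.sqrt (6 * (1 - ρ) / LH) * ‖v‖ ^ ((3:ℝ)/2) := by rw [h3]; ring
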